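/- Let r, s be real with 0 < s, 2s < r, and r + 5s/3 < 1, and suppose r ≤ (3 − 2s)/9. Let x₂ ∈ (2r + s/3, 1 − r − s/3) and x₁ ∈ (r, x₂ − r − s/3). Then the three points (x₁, x₂), (1 − x₂ − s/3, 1 − x₂ + x₁), (x₂ − x₁ − s/3, 1 − s/3 − x₁) all lie in the closed region D8 = {(y₁, y₂) : r ≤ y₁ ≤ y₂ ≤ 1 − 4s/3}, and F₈ maps each of them cyclically to the next: F₈(x₁, x₂) = (1 − x₂ − s/3, 1 − x₂ + x₁), F₈(1 − x₂ − s/3, 1 − x₂ + x₁) = (x₂ − x₁ − s/3, 1 − s/3 − x₁), and F₈(x₂ − x₁ − s/3, 1 − s/3 − x₁) = (x₁, x₂). Thus there is a two-parameter family of period-3 orbits lying entirely in region 8. -/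
import Mathlib

/-- The affine branch of the return-time map on region 8. -/
noncomputable def F8 (s : ℝ) (p : ℝ × ℝ) : ℝ × ℝ :=
  (1 - p.2 - s/3, 1 - p.2 + p.1)

/-- The closed region D8. -/
def D8 (r s : ℝ) : Set (ℝ × ℝ) :=
  {p | r ≤ p.1 ∧ p.1 ≤ p.2 ∧ p.2 ≤ 1 - 4*s/3}

theorem neutral_period3_family_in_region8 (r s x₁ x₂ : ℝ)
    (hs : 0 < s) (hrs : 2*s < r) (h1 : r + 5*s/3 < 1) (hhi : r ≤ (3 - 2*s)/9)
    (hx2lo : 2*r + s/3 < x₂) (hx2hi : x₂ < 1 - r - s/3)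
    (hx1lo : r < x₁) (hx1hi : x₁ < x₂ - r - s/3) :
    (x₁, x₂) ∈ D8 r s ∧
    (1 - x₂ - s/3, 1 - x₂ + x₁) ∈ D8 r s ∧
    (x₂ - x₁ - s/3, 1 - s/3 - x₁) ∈ D8 r s ∧
    F8 s (x₁, x₂) = (1 - x₂ - s/3, 1 - x₂ + x₁) ∧
    F8 s (1 - x₂ - s/3, 1 - x₂ + x₁) = (x₂ - x₁ - s/3, 1 - s/3 - x₁) ∧
    F8 s (x₂ - x₁ - s/3, 1 - s/3 - x₁) = (x₁, x₂) := by
  refine ⟨⟨by linarith, by linarith, by linarith⟩,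
    ⟨by linarith, by linarith, by linarith⟩,
    ⟨by linarith, by linarith, by linarith⟩,
    ?_, ?_, ?_⟩ <;> simp [F8, Prod.ext_iff] <;> constructor <;> ring
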